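/- For an r×r matrix A with commuting entries, tr S^n(A) = Σ_{m_1+···+m_r = n} G(m_1,...,m_r), where G(m_1,...,m_r) is the coefficient of x_1^{m_1}···x_r^{m_r} in Π_i (Σ_j a_{ij} x_j)^{m_i}. -/

import Mathlib

open MvPolynomial

section aux
variable {R : Type*} [CommRing R] {r n : ℕ}

/-- degree of a finsupp on a fintype is the full sum. -/
lemma degree_eq_sum_univ (d : Fin r →₀ ℕ) : d.degree = ∑ i, d i := by
  rw [Finsupp.degree]
  exact Finset.sum_subset (Finset.subset_univ _)
    (fun _ _ h => Finsupp.notMem_support_iff.mp h)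

/-- The index set equivalence. -/
noncomputable def eAux (r n : ℕ) : {d : Fin r →₀ ℕ // d.degree = n} ≃ ↥(Finset.Nat.antidiagonalTuple r n) where
  toFun d := ⟨⇑d.1, by
    rw [Finset.Nat.mem_antidiagonalTuple, ← degree_eq_sum_univ]; exact d.2⟩
  invFun m := ⟨Finsupp.equivFunOnFinite.symm m.1, by
    rw [degree_eq_sum_univ]
    exact (Finset.Nat.mem_antidiagonalTuple.mp m.2)⟩
  left_inv d := by ext; simp [Finsupp.equivFunOnFinite]
  right_inv m := by ext; rfl

noncomputable instance : Fintype {d : Fin r →₀ ℕ // d.degree = n} :=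
  Fintype.ofEquiv _ (eAux r n).symm

noncomputable def bAux (R : Type*) [CommRing R] (r n : ℕ) :
    Module.Basis {d : Fin r →₀ ℕ // d.degree = n} R (homogeneousSubmodule (Fin r) R n) :=
  Module.Basis.ofRepr <|
    (LinearEquiv.ofEq _ _ (homogeneousSubmodule_eq_finsupp_supported (Fin r) R n)).trans
      (AddMonoidAlgebra.supportedEquivFinsupp _)

lemma bAux_repr_apply (p : homogeneousSubmodule (Fin r) R n)
    (d : {d : Fin r →₀ ℕ // d.degree = n}) :
    (bAux R r n).repr p d = coeff d.1 (p : MvPolynomial (Fin r) R) := rfl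

lemma bAux_apply (d : {d : Fin r →₀ ℕ // d.degree = n}) :
    ((bAux R r n) d : MvPolynomial (Fin r) R) = monomial d.1 1 := by
  have hmem : (monomial d.1 (1 : R)) ∈ homogeneousSubmodule (Fin r) R n :=
    isHomogeneous_monomial _ d.2
  have : (bAux R r n) d = ⟨monomial d.1 1, hmem⟩ := by
    apply (bAux R r n).repr.injective
    rw [Module.Basis.repr_self]
    ext e
    rw [bAux_repr_apply]
    simp [coeff_monomial, Finsupp.single_apply, Subtype.ext_iff, eq_comm]
  rw [this]
end aux

/-- For an `r × r` matrix `A` over a commutative ring, the trace of the induced map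
`S^n(A)` on the `n`-th symmetric power of `R^r` (realized as the degree-`n` homogeneous
component of the polynomial ring, on which `A` acts by the substitution
`x i ↦ Σ_j A i j * x j`) equals `Σ_{m₁+⋯+m_r = n} G(m₁,…,m_r)`, where `G m` is the
coefficient of `x^m` in `Π_i (Σ_j A i j * x j)^(m i)`. -/
theorem trace_symmetricPower_eq_sum_G {R : Type*} [CommRing R] {r n : ℕ}
    (A : Matrix (Fin r) (Fin r) R)
    (f : MvPolynomial.homogeneousSubmodule (Fin r) R n →ₗ[R]
        MvPolynomial.homogeneousSubmodule (Fin r) R n)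
    (hf : ∀ p : MvPolynomial.homogeneousSubmodule (Fin r) R n,
      (f p : MvPolynomial (Fin r) R) =
        MvPolynomial.aeval (fun i => ∑ j, MvPolynomial.C (A i j) * MvPolynomial.X j)
          (p : MvPolynomial (Fin r) R)) :
    LinearMap.trace R _ f =
      ∑ m ∈ Finset.Nat.antidiagonalTuple r n,
        MvPolynomial.coeff (Finsupp.equivFunOnFinite.symm m)
          (∏ i, (∑ j, MvPolynomial.C (A i j) * MvPolynomial.X j) ^ m i) := by
  classical
  set b := (bAux R r n).reindex (eAux r n)
  rw [LinearMap.trace_eq_matrix_trace R b f, Matrix.trace]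
  rw [← Finset.sum_coe_sort (Finset.Nat.antidiagonalTuple r n)]
  apply Finset.sum_congr rfl
  intro m _
  rw [Matrix.diag, LinearMap.toMatrix_apply, Module.Basis.repr_reindex_apply, Module.Basis.reindex_apply, bAux_repr_apply, hf,
    bAux_apply]
  have hd : ((eAux r n).symm m).1 = Finsupp.equivFunOnFinite.symm m.1 := rfl
  rw [hd]
  congr 1
  rw [aeval_monomial, map_one, one_mul]
  rw [Finsupp.prod_pow]
  apply Finset.prod_congr rfl
  intro i _
  congr 1
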